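/- Let C be a cartesian closed category with a fixed object S, and T the state monad T X = (S × X)^S. Let (X, h) be a T-algebra, f_X = h ∘ (q_{S×X})^* : S × X ⟶ X, and suppose f_X = m ∘ e with e : S × X ⟶ Y an epimorphism and m : Y ⟶ X a monomorphism. If e has a section σ : Y ⟶ S × X (e ∘ σ = id_Y), then the transpose e^* : X ⟶ Y^S has a section; explicitly, Σ = h ∘ σ^S : Y^S ⟶ X satisfies e^* ∘ Σ = id_{Y^S}. -/

import Mathlib

open CategoryTheory CategoryTheory.MonoidalCategory CategoryTheory.Limits
  CategoryTheory.CartesianMonoidalCategory CategoryTheory.CartesianClosed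

/-- In a cartesian closed category `C` with a fixed object `S`, for the state
monad `T X = (S × X)^S` and a `T`-algebra `(X, h)`, if `f_X = h ∘ (q_{S×X})^*` factors as an epi
`e` followed by a mono `m`, and `e` has a section `σ`, then `Σ = h ∘ σ^S` is a section of the
transpose `e^* : X ⟶ Y^S`. -/
theorem stmt8 {C : Type u} [Category.{v} C] [CartesianMonoidalCategory C] [MonoidalClosed C]
    (S : C) (A : ((ihom.adjunction S).toMonad).Algebra)
    (Y : C) (e : S ⊗ A.A ⟶ Y) (m : Y ⟶ A.A)
    (hfac : MonoidalClosed.curry (snd S (S ⊗ A.A)) ≫ A.a = e ≫ m)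
    (he : Epi e) (hm : Mono m)
    (σ : Y ⟶ S ⊗ A.A) (hσ : σ ≫ e = 𝟙 Y) :
    ((ihom S).map σ ≫ A.a) ≫ MonoidalClosed.curry e = 𝟙 (S ⟹ Y) := by
  apply MonoidalClosed.uncurry_injective
  rw [MonoidalClosed.uncurry_natural_left, MonoidalClosed.uncurry_curry,
    MonoidalClosed.uncurry_id_eq_ev, ← cancel_mono m]
  have hμ : ((ihom.adjunction S).toMonad).μ.app A.A = (ihom S).map ((ihom.ev S).app (S ⊗ A.A)) := rfl
  have hTmap : ((ihom.adjunction S).toMonad : C ⥤ C).map A.a = (ihom S).map (S ◁ A.a) := rfl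
  -- naturality of the "thunk" map in the algebra structure map
  have hnat : (S ◁ A.a) ≫ MonoidalClosed.curry (snd S (S ⊗ A.A))
      = MonoidalClosed.curry (snd S (S ⊗ (S ⟹ (S ⊗ A.A)))) ≫ (ihom S).map (S ◁ A.a) := by
    rw [← MonoidalClosed.curry_natural_left, ← MonoidalClosed.curry_natural_right]
    congr 1
    simp
    rfl
  calc (S ◁ ((ihom S).map σ ≫ A.a) ≫ e) ≫ m
      = (S ◁ (ihom S).map σ) ≫ (S ◁ A.a) ≫ (e ≫ m) := by
        erw [MonoidalCategory.whiskerLeft_comp]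
        simp
    _ = (S ◁ (ihom S).map σ) ≫ (S ◁ A.a) ≫ MonoidalClosed.curry (snd S (S ⊗ A.A)) ≫ A.a := by
        rw [hfac]
    _ = (S ◁ (ihom S).map σ) ≫ MonoidalClosed.curry (snd S (S ⊗ (S ⟹ (S ⊗ A.A))))
          ≫ ((ihom.adjunction S).toMonad : C ⥤ C).map A.a ≫ A.a := by
        erw [reassoc_of% hnat, hTmap]
        erw [Category.assoc]
        rfl
    _ = (S ◁ (ihom S).map σ) ≫ MonoidalClosed.curry (snd S (S ⊗ (S ⟹ (S ⊗ A.A))))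
          ≫ ((ihom.adjunction S).toMonad).μ.app A.A ≫ A.a := by
        erw [A.assoc]
        rfl
    _ = (S ◁ (ihom S).map σ) ≫
          MonoidalClosed.curry (snd S (S ⊗ (S ⟹ (S ⊗ A.A)))
            ≫ (ihom.ev S).app (S ⊗ A.A)) ≫ A.a := by
        erw [hμ, ← MonoidalClosed.curry_natural_right_assoc]
    _ = MonoidalClosed.curry (snd S (S ⊗ (S ⟹ Y)) ≫ (ihom.ev S).app Y ≫ σ) ≫ A.a := by
        erw [← MonoidalClosed.curry_natural_left_assoc]
        congr 2
        have hev := (ihom.ev S).naturality σ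
        dsimp at hev
        rw [whiskerLeft_snd_assoc, hev]
    _ = ((ihom.ev S).app Y ≫ σ) ≫ MonoidalClosed.curry (snd S (S ⊗ A.A)) ≫ A.a := by
        erw [← MonoidalClosed.curry_natural_left_assoc]
        congr 2
        simp
    _ = (ihom.ev S).app Y ≫ m := by
        rw [hfac]
        simp [reassoc_of% hσ]
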